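/- For the unicycle with fixed speed v > 0, if h(p(0)) ≥ 0 and at every time the constraint 2⟨p − o, (cos θ, sin θ)⟩·v + α(‖p−o‖² − d²) ≥ 0 holds, then ‖p(t) − o‖ ≥ d for all t ≥ 0. -/

import Mathlib

/-- For the unicycle with fixed speed v > 0: if h(p(0)) ≥ 0 and the CBF constraint
2⟨p − o, (cos θ, sin θ)⟩·v + α(‖p − o‖² − d²) ≥ 0 holds at every time t ≥ 0, then
the robot never enters the ball of radius d around the obstacle:
‖p(t) − o‖ ≥ d for all t ≥ 0. -/
theorem unicycle_cbf_safety
    (px py θ : ℝ → ℝ) (ω : ℝ → ℝ) (v ox oy d α : ℝ)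
    (hv : 0 < v) (hd : 0 < d) (hα : 0 < α)
    (hpx : ∀ t, 0 ≤ t → HasDerivAt px (v * Real.cos (θ t)) t)
    (hpy : ∀ t, 0 ≤ t → HasDerivAt py (v * Real.sin (θ t)) t)
    (hθ : ∀ t, 0 ≤ t → HasDerivAt θ (ω t) t)
    (h0 : 0 ≤ (px 0 - ox) ^ 2 + (py 0 - oy) ^ 2 - d ^ 2)
    (hcbf : ∀ t, 0 ≤ t →
      0 ≤ 2 * ((px t - ox) * Real.cos (θ t) + (py t - oy) * Real.sin (θ t)) * v +
        α * ((px t - ox) ^ 2 + (py t - oy) ^ 2 - d ^ 2)) :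
    ∀ t, 0 ≤ t → d ≤ Real.sqrt ((px t - ox) ^ 2 + (py t - oy) ^ 2) := by
  set h : ℝ → ℝ := fun t => (px t - ox) ^ 2 + (py t - oy) ^ 2 - d ^ 2 with hh
  set g : ℝ → ℝ := fun t => h t * Real.exp (α * t) with hg
  have hderiv : ∀ s, 0 ≤ s → HasDerivAt g
      ((2 * (px s - ox) * (v * Real.cos (θ s)) + 2 * (py s - oy) * (v * Real.sin (θ s))
        + α * h s) * Real.exp (α * s)) s := by
    intro s hs
    have hhd : HasDerivAt h
        (2 * (px s - ox) * (v * Real.cos (θ s)) + 2 * (py s - oy) * (v * Real.sin (θ s))) s := by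
      have h1 : HasDerivAt (fun t => (px t - ox) ^ 2)
          (2 * (px s - ox) * (v * Real.cos (θ s))) s := by
        have := ((hpx s hs).sub_const ox).pow 2
        simpa [mul_comm, mul_assoc, mul_left_comm, Pi.pow_def] using this
      have h2 : HasDerivAt (fun t => (py t - oy) ^ 2)
          (2 * (py s - oy) * (v * Real.sin (θ s))) s := by
        have := ((hpy s hs).sub_const oy).pow 2
        simpa [mul_comm, mul_assoc, mul_left_comm, Pi.pow_def] using this
      exact (h1.add h2).sub_const (d ^ 2)
    have hed : HasDerivAt (fun t => Real.exp (α * t)) (α * Real.exp (α * s)) s := by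
      have := (Real.hasDerivAt_exp (α * s)).comp s ((hasDerivAt_id s).const_mul α)
      simpa [mul_comm, Function.comp_def] using this
    have := hhd.mul hed
    exact this.congr_deriv (by ring)
  intro t ht
  have hmono : g 0 ≤ g t := by
    rcases eq_or_lt_of_le ht with rfl | ht'
    · exact le_rfl
    have hcont : ContinuousOn g (Set.Icc 0 t) := fun s hs =>
      ((hderiv s hs.1).continuousAt).continuousWithinAt
    have hmo : MonotoneOn g (Set.Icc 0 t) := by
      apply monotoneOn_of_deriv_nonneg (convex_Icc 0 t) hcont
      · intro s hs
        rw [interior_Icc] at hs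
        exact ((hderiv s hs.1.le).differentiableAt).differentiableWithinAt
      · intro s hs
        rw [interior_Icc] at hs
        rw [(hderiv s hs.1.le).deriv]
        have hA : 0 ≤ 2 * (px s - ox) * (v * Real.cos (θ s)) +
            2 * (py s - oy) * (v * Real.sin (θ s)) + α * h s := by
          have := hcbf s hs.1.le
          simp only [hh]
          nlinarith [this]
        exact mul_nonneg hA (Real.exp_pos _).le
    exact hmo (Set.left_mem_Icc.2 ht) (Set.right_mem_Icc.2 ht) ht
  have hg0 : 0 ≤ g 0 := by
    simp only [hg, hh, mul_zero, Real.exp_zero, mul_one]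
    exact h0
  have hht : 0 ≤ h t := by
    have := hg0.trans hmono
    have hpos := Real.exp_pos (α * t)
    simp only [hg] at this
    nlinarith
  have hd2 : d ^ 2 ≤ (px t - ox) ^ 2 + (py t - oy) ^ 2 := by
    simp only [hh] at hht; linarith
  have := Real.sqrt_le_sqrt hd2
  rwa [Real.sqrt_sq hd.le] at this
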